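/- (Far-from-center welding is fast, special case.) Suppose a continuous driver $\xi : [0,\tau] \to \mathbb{R}$ welds points $x_0 < \xi(0) < y_0$ with $x_0 + y_0 = 0$ at time $\tau$, and $|\xi(\tau)| = \delta > 0$. Then $\tau < (y_0 - x_0)^2/16$; more precisely, there exists a function $f(\delta)$, strictly decreasing in $\delta$ with $f(0) = (y_0-x_0)^2/16$, depending only on $\delta$ and $y_0$, such that $\tau \leq f(\delta)$. -/

import Mathlib

set_option maxHeartbeats 1000000
open Set

lemma antitoneOn_of_hasDerivAt_nonpos' {f f' : ℝ → ℝ} {A B : ℝ}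
    (hf : ContinuousOn f (Icc A B))
    (hd : ∀ t ∈ Ioo A B, HasDerivAt f (f' t) t)
    (h0 : ∀ t ∈ Ioo A B, f' t ≤ 0) : AntitoneOn f (Icc A B) := by
  apply antitoneOn_of_deriv_nonpos (convex_Icc A B) hf
  · rw [interior_Icc]
    exact fun t ht => (hd t ht).differentiableAt.differentiableWithinAt
  · rw [interior_Icc]
    intro t ht
    rw [(hd t ht).deriv]
    exact h0 t ht

lemma key_alg (a b l μ : ℝ) (hl : 0 ≤ l)
    (hμ : 0 ≤ μ) (hμ2 : μ ^ 2 = 1 - l ^ 2) :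
    (8 + 8 * μ) * (a * b) + 4 * l * (a + b) * |a - b| ≤ 4 * (a + b) ^ 2 := by
  set s := |a - b| with hs
  have hs0 : 0 ≤ s := abs_nonneg _
  have hs2 : s ^ 2 = (a - b) ^ 2 := sq_abs _
  have h1 : (1 + μ) * (4 * (a + b) ^ 2 - (8 + 8 * μ) * (a * b) - 4 * l * (a + b) * s)
      = 2 * (l * (a + b) - (1 + μ) * s) ^ 2 := by
    linear_combination (-2 * (1 + μ) ^ 2) * hs2 + (-2 * (a + b) ^ 2) * hμ2
  nlinarith [sq_nonneg (l * (a + b) - (1 + μ) * s)]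

theorem statement15 (y₀ : ℝ) (hy₀ : 0 < y₀) :
    ∃ f : ℝ → ℝ, StrictAntiOn f (Set.Ici 0) ∧ f 0 = y₀ ^ 2 / 4 ∧
      ∀ (δ τ : ℝ) (ξ x y : ℝ → ℝ), 0 < δ → 0 < τ →
        ContinuousOn ξ (Set.Icc 0 τ) →
        x 0 = -y₀ → y 0 = y₀ →
        (∀ t ∈ Set.Ico (0:ℝ) τ, HasDerivWithinAt x (-2 / (x t - ξ t)) (Set.Ici 0) t) →
        (∀ t ∈ Set.Ico (0:ℝ) τ, HasDerivWithinAt y (-2 / (y t - ξ t)) (Set.Ici 0) t) →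
        (∀ t ∈ Set.Ico (0:ℝ) τ, x t < ξ t ∧ ξ t < y t) →
        ContinuousOn x (Set.Icc 0 τ) → ContinuousOn y (Set.Icc 0 τ) →
        x τ = ξ τ → y τ = ξ τ → |ξ τ| = δ →
        τ ≤ f δ ∧ τ < y₀ ^ 2 / 4 := by
  have hy2 : (0:ℝ) < y₀ ^ 2 := by positivity
  refine ⟨fun δ => y₀ ^ 2 / 4 - δ ^ 4 / (32 * y₀ ^ 2), ?_, by norm_num, ?_⟩
  · intro p hp q hq hpq
    simp only
    have h4 : p ^ 4 < q ^ 4 := pow_lt_pow_left₀ hpq hp (by norm_num)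
    have h5 : p ^ 4 / (32 * y₀ ^ 2) < q ^ 4 / (32 * y₀ ^ 2) :=
      (div_lt_div_iff_of_pos_right (by positivity)).mpr h4
    linarith
  intro δ τ ξ x y hδ hτ hξc hx0 hy0 hdx hdy hbet hxc hyc hxτ hyτ hξτ
  -- upgrade one-sided derivatives to full derivatives on the open interval
  have hx' : ∀ t ∈ Ioo 0 τ, HasDerivAt x (-2 / (x t - ξ t)) t := fun t ht =>
    (hdx t ⟨ht.1.le, ht.2⟩).hasDerivAt (Ici_mem_nhds ht.1)
  have hy' : ∀ t ∈ Ioo 0 τ, HasDerivAt y (-2 / (y t - ξ t)) t := fun t ht =>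
    (hdy t ⟨ht.1.le, ht.2⟩).hasDerivAt (Ici_mem_nhds ht.1)
  -- monotonicity of x and y
  have hxmono : StrictMonoOn x (Icc 0 τ) := by
    apply strictMonoOn_of_deriv_pos (convex_Icc 0 τ) hxc
    rw [interior_Icc]
    intro t ht
    rw [(hx' t ht).deriv]
    have hb := (hbet t ⟨ht.1.le, ht.2⟩).1
    have hneg : x t - ξ t < 0 := by linarith
    exact div_pos_of_neg_of_neg (by norm_num) hneg
  have hymono : StrictAntiOn y (Icc 0 τ) := by
    apply strictAntiOn_of_deriv_neg (convex_Icc 0 τ) hyc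
    rw [interior_Icc]
    intro t ht
    rw [(hy' t ht).deriv]
    have ha := (hbet t ⟨ht.1.le, ht.2⟩).2
    have hpos : 0 < y t - ξ t := by linarith
    exact div_neg_of_neg_of_pos (by norm_num) hpos
  have h0mem : (0:ℝ) ∈ Icc 0 τ := ⟨le_refl 0, hτ.le⟩
  have hτmem : τ ∈ Icc 0 τ := ⟨hτ.le, le_refl τ⟩
  have hδy : δ < y₀ := by
    have h1 : x 0 < x τ := hxmono h0mem hτmem hτ
    have h2 : y τ < y 0 := hymono h0mem hτmem hτ
    rcases (abs_eq hδ.le).mp hξτ with h | h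
    · have : y τ = δ := hyτ.trans h
      rw [hy0] at h2; linarith
    · have : x τ = -δ := hxτ.trans h
      rw [hx0] at h1; linarith
  -- the basic monotone quantity  d^2 + 16 t
  have hM : AntitoneOn (fun t => (y t - x t) ^ 2 + 16 * t) (Icc 0 τ) := by
    apply antitoneOn_of_hasDerivAt_nonpos' (f' := fun t =>
        2 * (y t - x t) * ((-2 / (y t - ξ t)) - (-2 / (x t - ξ t))) + 16)
    · exact ((hyc.sub hxc).pow 2).add (continuousOn_const.mul continuousOn_id)
    · intro t ht
      have h1 := ((hy' t ht).sub (hx' t ht)).pow 2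
      have h2 := h1.add ((hasDerivAt_id t).const_mul (16 : ℝ))
      refine HasDerivAt.congr_deriv h2 ?_
      simp only [Pi.sub_apply]
      ring
    · intro t ht
      obtain ⟨hb, ha⟩ := hbet t ⟨ht.1.le, ht.2⟩
      have hA0 : 0 < y t - ξ t := by linarith
      have hB0 : 0 < ξ t - x t := by linarith
      have hAB : 0 < (y t - ξ t) * (ξ t - x t) := mul_pos hA0 hB0
      have h1 : y t - ξ t ≠ 0 := ne_of_gt hA0
      have h2 : x t - ξ t ≠ 0 := by intro h; apply ne_of_gt hB0; linarith
      have e1 : 2 * (y t - x t) * ((-2 / (y t - ξ t)) - (-2 / (x t - ξ t))) + 16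
          = 16 - 4 * ((y t - ξ t) + (ξ t - x t)) ^ 2 / ((y t - ξ t) * (ξ t - x t)) := by
        field_simp
        ring
      rw [e1, sub_nonpos, le_div_iff₀ hAB]
      nlinarith [sq_nonneg ((y t - ξ t) - (ξ t - x t))]
  -- d is antitone
  have hdmono : AntitoneOn (fun t => y t - x t) (Icc 0 τ) := by
    apply antitoneOn_of_hasDerivAt_nonpos'
        (f' := fun t => (-2 / (y t - ξ t)) - (-2 / (x t - ξ t)))
    · exact hyc.sub hxc
    · exact fun t ht => (hy' t ht).sub (hx' t ht)
    · intro t ht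
      obtain ⟨hb, ha⟩ := hbet t ⟨ht.1.le, ht.2⟩
      have hA0 : 0 < y t - ξ t := by linarith
      have hB0 : x t - ξ t < 0 := by linarith
      have h1 : -2 / (y t - ξ t) < 0 := div_neg_of_neg_of_pos (by norm_num) hA0
      have h2 : 0 < -2 / (x t - ξ t) := div_pos_of_neg_of_neg (by norm_num) hB0
      linarith
  -- the crossing time t₁ where d = δ
  obtain ⟨t₁, ht₁mem, ht₁⟩ : ∃ t₁ ∈ Icc 0 τ, y t₁ - x t₁ = δ := by
    have hsub := intermediate_value_Icc' hτ.le (hyc.sub hxc)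
    have hmemδ : δ ∈ Icc (y τ - x τ) (y 0 - x 0) := by
      constructor
      · rw [hxτ, hyτ]; simp [hδ.le]
      · rw [hx0, hy0]; linarith
    obtain ⟨t₁, h1, h2⟩ := hsub hmemδ
    exact ⟨t₁, h1, h2⟩
  have ht₁0 : 0 ≤ t₁ := ht₁mem.1
  have ht₁τ : t₁ ≤ τ := ht₁mem.2
  have hsubIcc : Icc 0 t₁ ⊆ Icc 0 τ := Icc_subset_Icc le_rfl ht₁τ
  -- the sign σ
  obtain ⟨σ, hσpm, hσξ⟩ : ∃ σ : ℝ, (σ = 1 ∨ σ = -1) ∧ σ * ξ τ = δ := by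
    rcases (abs_eq hδ.le).mp hξτ with h | h
    · exact ⟨1, Or.inl rfl, by rw [h]; ring⟩
    · exact ⟨-1, Or.inr rfl, by rw [h]; ring⟩
  -- parameters l and μ
  set l : ℝ := δ ^ 2 / (2 * y₀ ^ 2) with hldef
  have hl0 : 0 < l := by positivity
  have hl1 : l < 1 := by
    rw [hldef, div_lt_one (by positivity)]
    nlinarith
  set μ : ℝ := Real.sqrt (1 - l ^ 2) with hμdef
  have hμ0 : 0 ≤ μ := Real.sqrt_nonneg _
  have hμ2 : μ ^ 2 = 1 - l ^ 2 := Real.sq_sqrt (by nlinarith)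
  have hμ1 : μ ≤ 1 := by nlinarith
  have hμl : 1 - μ ≤ l ^ 2 := by nlinarith [mul_nonneg hμ0 (sub_nonneg.mpr hμ1)]
  -- the refined monotone quantity Ψ on [0, t₁]
  have hΨ : AntitoneOn (fun t => (y t - x t) ^ 2 + (8 + 8 * μ) * t
      + 2 * l * δ * (σ * (x t + y t))) (Icc 0 t₁) := by
    apply antitoneOn_of_hasDerivAt_nonpos' (f' := fun t =>
        2 * (y t - x t) * ((-2 / (y t - ξ t)) - (-2 / (x t - ξ t))) + (8 + 8 * μ)
        + 2 * l * δ * (σ * ((-2 / (x t - ξ t)) + (-2 / (y t - ξ t)))))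
    · apply ContinuousOn.add
      apply ContinuousOn.add
      · exact (((hyc.sub hxc).pow 2)).mono hsubIcc
      · exact continuousOn_const.mul continuousOn_id
      · exact continuousOn_const.mul (continuousOn_const.mul
          ((hxc.mono hsubIcc).add (hyc.mono hsubIcc)))
    · intro t ht
      have htτ : t ∈ Ioo 0 τ := ⟨ht.1, lt_of_lt_of_le ht.2 ht₁τ⟩
      have h1 := ((hy' t htτ).sub (hx' t htτ)).pow 2
      have h2 := h1.add ((hasDerivAt_id t).const_mul ((8 : ℝ) + 8 * μ))
      have h3 := (((hx' t htτ).add (hy' t htτ)).const_mul σ).const_mul (2 * l * δ)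
      refine HasDerivAt.congr_deriv (h2.add h3) ?_
      simp only [Pi.sub_apply]
      ring
    · intro t ht
      have htτ : t ∈ Ioo 0 τ := ⟨ht.1, lt_of_lt_of_le ht.2 ht₁τ⟩
      obtain ⟨hb, ha⟩ := hbet t ⟨htτ.1.le, htτ.2⟩
      have hA0 : 0 < y t - ξ t := by linarith
      have hB0 : 0 < ξ t - x t := by linarith
      have hAB : 0 < (y t - ξ t) * (ξ t - x t) := mul_pos hA0 hB0
      have h1 : y t - ξ t ≠ 0 := ne_of_gt hA0
      have h2 : x t - ξ t ≠ 0 := by intro h; apply ne_of_gt hB0; linarith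
      have hδd : δ ≤ y t - x t := by
        have hh := hdmono (hsubIcc ⟨ht.1.le, ht.2.le⟩) ht₁mem ht.2.le
        simp only at hh
        linarith [ht₁]
      have hσz : σ * ((y t - ξ t) - (ξ t - x t)) ≤ |(y t - ξ t) - (ξ t - x t)| := by
        rcases hσpm with rfl | rfl
        · rw [one_mul]; exact le_abs_self _
        · rw [neg_one_mul]; exact neg_le_abs _
      have hkey := key_alg (y t - ξ t) (ξ t - x t) l μ hl0.le hμ0 hμ2
      have h5 : 4 * l * δ * (σ * ((y t - ξ t) - (ξ t - x t)))
          ≤ 4 * l * ((y t - ξ t) + (ξ t - x t)) * |(y t - ξ t) - (ξ t - x t)| := by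
        have s1 : 4 * l * δ * (σ * ((y t - ξ t) - (ξ t - x t)))
            ≤ 4 * l * δ * |(y t - ξ t) - (ξ t - x t)| :=
          mul_le_mul_of_nonneg_left hσz (by positivity)
        have s2 : 4 * l * δ ≤ 4 * l * ((y t - ξ t) + (ξ t - x t)) := by nlinarith
        have s3 : 4 * l * δ * |(y t - ξ t) - (ξ t - x t)|
            ≤ 4 * l * ((y t - ξ t) + (ξ t - x t)) * |(y t - ξ t) - (ξ t - x t)| :=
          mul_le_mul_of_nonneg_right s2 (abs_nonneg _)
        linarith
      have hmain : (8 + 8 * μ) * ((y t - ξ t) * (ξ t - x t))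
          + 4 * l * δ * (σ * ((y t - ξ t) - (ξ t - x t)))
          ≤ 4 * ((y t - ξ t) + (ξ t - x t)) ^ 2 := by linarith
      have e1 : 2 * (y t - x t) * ((-2 / (y t - ξ t)) - (-2 / (x t - ξ t))) + (8 + 8 * μ)
          + 2 * l * δ * (σ * ((-2 / (x t - ξ t)) + (-2 / (y t - ξ t))))
          = ((8 + 8 * μ) * ((y t - ξ t) * (ξ t - x t))
            + 4 * l * δ * (σ * ((y t - ξ t) - (ξ t - x t)))
            - 4 * ((y t - ξ t) + (ξ t - x t)) ^ 2) / ((y t - ξ t) * (ξ t - x t)) := by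
        field_simp
        ring
      rw [e1, div_nonpos_iff]
      exact Or.inr ⟨by linarith, hAB.le⟩
  -- endpoint evaluations
  have hx1 : x t₁ ≤ ξ τ := by
    have := hxmono.monotoneOn ht₁mem hτmem ht₁τ
    linarith [hxτ]
  have hy1 : ξ τ ≤ y t₁ := by
    have := hymono.antitoneOn ht₁mem hτmem ht₁τ
    linarith [hyτ]
  have hu1 : δ ≤ σ * (x t₁ + y t₁) := by
    rcases hσpm with rfl | rfl
    · have hξδ : ξ τ = δ := by linarith [hσξ]
      have : y t₁ - x t₁ = δ := ht₁
      nlinarith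
    · have hξδ : ξ τ = -δ := by linarith [hσξ]
      have : y t₁ - x t₁ = δ := ht₁
      nlinarith
  have hΨineq := hΨ ⟨le_refl 0, ht₁0⟩ ⟨ht₁0, le_refl t₁⟩ ht₁0
  simp only at hΨineq
  have hE2 : δ ^ 2 + (8 + 8 * μ) * t₁ + 2 * l * δ * δ ≤ 4 * y₀ ^ 2 := by
    have hb1 : 2 * l * δ * δ ≤ 2 * l * δ * (σ * (x t₁ + y t₁)) :=
      mul_le_mul_of_nonneg_left hu1 (by positivity)
    rw [hx0, hy0, ht₁] at hΨineq
    nlinarith [hΨineq]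
  have hMτ := hM ht₁mem hτmem ht₁τ
  simp only at hMτ
  rw [hxτ, hyτ, ht₁] at hMτ
  -- hMτ : (ξτ - ξτ)^2 + 16 τ ≤ δ^2 + 16 t₁
  have hM16 : 16 * τ ≤ δ ^ 2 + 16 * t₁ := by nlinarith [hMτ]
  have hM0τ := hM h0mem hτmem hτ.le
  simp only at hM0τ
  rw [hx0, hy0, hxτ, hyτ] at hM0τ
  have hτbound : τ ≤ y₀ ^ 2 / 4 := by nlinarith [hM0τ]
  -- final arithmetic
  have hlsq : (1 - μ) * t₁ ≤ l ^ 2 * (y₀ ^ 2 / 4) :=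
    mul_le_mul hμl (by linarith) ht₁0 (by positivity)
  have e1 : 2 * l * δ * δ = δ ^ 4 / y₀ ^ 2 := by rw [hldef]; field_simp
  have e2 : l ^ 2 * (y₀ ^ 2 / 4) = δ ^ 4 / (16 * y₀ ^ 2) := by rw [hldef]; field_simp; ring
  have e3 : δ ^ 4 / y₀ ^ 2 - 8 * (δ ^ 4 / (16 * y₀ ^ 2)) = δ ^ 4 / (2 * y₀ ^ 2) := by
    field_simp; ring
  have e4 : 16 * (y₀ ^ 2 / 4 - δ ^ 4 / (32 * y₀ ^ 2)) = 4 * y₀ ^ 2 - δ ^ 4 / (2 * y₀ ^ 2) := by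
    field_simp; ring
  have goal1 : τ ≤ y₀ ^ 2 / 4 - δ ^ 4 / (32 * y₀ ^ 2) := by linarith
  refine ⟨goal1, ?_⟩
  have hpos : 0 < δ ^ 4 / (32 * y₀ ^ 2) := by positivity
  linarith
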